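/- Let n be even, q = 2^k with k ≥ 2, and f = a_0 + 2a_1 + ... + 2^{k−1}a_{k−1} : V_n → Z_q be gbent. Then for every c ∈ F_2^{k−1} and for any two pairs of vertices (u,v), (x,y), one has |N_{X_c^1}(u,v)| = |N_{X_c^1}(x,y)|, where X_c^1 = { ι(c̃) + ι(d) : c̃ ⪯ (c,1), wt(c̃) odd, d ⪯ c̄ } and N_S(u,v) = {w : f(u⊕w) ∈ S, f(v⊕w) ∈ S}. -/

import Mathlib

open Finset BigOperators

noncomputable def zeta (q : ℕ) : ℂ := Complex.exp (2 * Real.pi * Complex.I / q)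

def dotp {n : ℕ} (u x : Fin n → ZMod 2) : ZMod 2 := ∑ i, u i * x i

noncomputable def chr {n : ℕ} (u x : Fin n → ZMod 2) : ℂ := (-1 : ℂ) ^ (dotp u x).val

noncomputable def WHT {n q : ℕ} (f : (Fin n → ZMod 2) → ZMod q) (u : Fin n → ZMod 2) : ℂ :=
  ∑ x, zeta q ^ (f x).val * chr u x

noncomputable def Amat {n q : ℕ} (f : (Fin n → ZMod 2) → ZMod q) :
    Matrix (Fin n → ZMod 2) (Fin n → ZMod 2) ℂ :=
  fun u v => zeta q ^ (f (u + v)).val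

/-- The set `X_c^1 = { ι(c̃) + ι(d) : c̃ ⪯ (c,1), wt(c̃) odd, d ⪯ c̄ } ⊆ Z_{2^k}`. -/
def Xc1 (k : ℕ) (c : Fin k → ZMod 2) : Set (ZMod (2 ^ k)) :=
  { t | ∃ ct dd : Fin k → ZMod 2,
      (∀ i, (ct i).val ≤ (c i).val) ∧
      (∀ i : Fin k, ((i : ℕ) < k - 1 → (dd i).val ≤ 1 - (c i).val) ∧
                    ((i : ℕ) = k - 1 → (dd i).val = 0)) ∧
      Odd (∑ i, (ct i).val) ∧
      t = (((∑ i, (ct i).val * 2 ^ (i : ℕ)) + ∑ i, (dd i).val * 2 ^ (i : ℕ) : ℕ) :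
            ZMod (2 ^ k)) }


-- Section A : binary representation
lemma repr_lt : ∀ (k : ℕ) (b : Fin k → ZMod 2), (∑ i, (b i).val * 2 ^ (i : ℕ)) < 2 ^ k := by
  intro k
  induction k with
  | zero => intro b; simp
  | succ k ih =>
    intro b
    have h := ih (fun i => b i.succ)
    have hb : (b 0).val < 2 := ZMod.val_lt _
    rw [Fin.sum_univ_succ]
    have : ∑ i : Fin k, (b i.succ).val * 2 ^ (i.succ : ℕ)
        = 2 * ∑ i : Fin k, (b i.succ).val * 2 ^ (i : ℕ) := by
      rw [Finset.mul_sum]; apply Finset.sum_congr rfl; intro i _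
      simp [Fin.val_succ, pow_succ]; ring
    rw [this]
    simp only [Fin.val_zero, pow_zero, mul_one, pow_succ] at *
    omega

lemma repr_inj : ∀ (k : ℕ) (b b' : Fin k → ZMod 2),
    (∑ i, (b i).val * 2 ^ (i : ℕ)) = (∑ i, (b' i).val * 2 ^ (i : ℕ)) → b = b' := by
  intro k
  induction k with
  | zero => intro b b' _; funext i; exact absurd i.2 (by omega)
  | succ k ih =>
    intro b b' h
    have e1 : ∑ i : Fin (k+1), (b i).val * 2 ^ (i : ℕ)
        = (b 0).val + 2 * ∑ i : Fin k, (b i.succ).val * 2 ^ (i : ℕ) := by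
      rw [Fin.sum_univ_succ, Finset.mul_sum]
      simp only [Fin.val_zero, pow_zero, mul_one, Fin.val_succ, pow_succ]
      congr 1
      apply Finset.sum_congr rfl; intro i _; ring
    have e2 : ∑ i : Fin (k+1), (b' i).val * 2 ^ (i : ℕ)
        = (b' 0).val + 2 * ∑ i : Fin k, (b' i.succ).val * 2 ^ (i : ℕ) := by
      rw [Fin.sum_univ_succ, Finset.mul_sum]
      simp only [Fin.val_zero, pow_zero, mul_one, Fin.val_succ, pow_succ]
      congr 1
      apply Finset.sum_congr rfl; intro i _; ring
    rw [e1, e2] at h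
    have hb : (b 0).val < 2 := ZMod.val_lt _
    have hb' : (b' 0).val < 2 := ZMod.val_lt _
    have h0 : (b 0).val = (b' 0).val := by omega
    have ht : ∑ i : Fin k, (b i.succ).val * 2 ^ (i : ℕ)
        = ∑ i : Fin k, (b' i.succ).val * 2 ^ (i : ℕ) := by omega
    have h0' : b 0 = b' 0 := ZMod.val_injective _ h0
    have htail := ih (fun i => b i.succ) (fun i => b' i.succ) ht
    funext i
    rcases Fin.eq_zero_or_eq_succ i with rfl | ⟨j, rfl⟩
    · exact h0'
    · exact congrFun htail j
open Finset BigOperators Polynomial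

lemma indep (k : ℕ) (hk : 1 ≤ k) {ζ : ℂ} (hζ : IsPrimitiveRoot ζ (2 ^ k)) (γ : ℕ → ℤ)
    (h : ∑ t ∈ Finset.range (2 ^ (k - 1)), (γ t : ℂ) * ζ ^ t = 0) :
    ∀ t < 2 ^ (k - 1), γ t = 0 := by
  set m := 2 ^ (k - 1) with hm
  set P : ℚ[X] := ∑ t ∈ Finset.range m, Polynomial.C ((γ t : ℚ)) * Polynomial.X ^ t with hP
  have haev : (Polynomial.aeval ζ) P = 0 := by
    rw [hP, map_sum]
    rw [← h]
    apply Finset.sum_congr rfl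
    intro t _
    simp only [map_mul, map_pow, Polynomial.aeval_C, Polynomial.aeval_X]
    norm_cast
  have hdegm : (minpoly ℚ ζ).degree = (m : ℕ) := by
    rw [← Polynomial.cyclotomic_eq_minpoly_rat hζ (by positivity)]
    rw [Polynomial.degree_cyclotomic]
    norm_cast
    rw [Nat.totient_prime_pow Nat.prime_two (by omega)]
    simp [hm]
  have hP0 : P = 0 := by
    by_contra hne
    have hlt : P.degree < (m : ℕ) := by
      apply lt_of_le_of_lt (Polynomial.degree_sum_le _ _)
      rw [Finset.sup_lt_iff (by exact_mod_cast WithBot.bot_lt_coe (m:ℕ))]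
      intro t ht
      apply lt_of_le_of_lt (Polynomial.degree_C_mul_X_pow_le _ _)
      exact_mod_cast Finset.mem_range.mp ht
    have := minpoly.degree_le_of_ne_zero ℚ ζ hne haev
    rw [hdegm] at this
    exact absurd (lt_of_le_of_lt this hlt) (lt_irrefl _)
  intro t ht
  have : P.coeff t = (γ t : ℚ) := by
    rw [hP, Polynomial.finset_sum_coeff]
    rw [Finset.sum_eq_single t]
    · simp
    · intro s _ hs
      simp [Polynomial.coeff_C_mul, Polynomial.coeff_X_pow, (Ne.symm hs)]
    · intro hmem; exact absurd (Finset.mem_range.mpr ht) hmem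
  rw [hP0] at this
  simp at this
  exact_mod_cast this.symm
open Finset BigOperators Polynomial

section C
variable {k : ℕ} {ζ : ℂ}

/-- the subring ℤ[ζ] in coordinate form -/
def InR (k : ℕ) (ζ : ℂ) (x : ℂ) : Prop :=
  ∃ b : ℕ → ℤ, x = ∑ t ∈ Finset.range (2 ^ (k - 1)), (b t : ℂ) * ζ ^ t

lemma pow_2k (hζ : IsPrimitiveRoot ζ (2 ^ k)) : ζ ^ (2 ^ k) = 1 := hζ.pow_eq_one

lemma pow_mod2k (hζ : IsPrimitiveRoot ζ (2 ^ k)) (r : ℕ) : ζ ^ r = ζ ^ (r % 2 ^ k) := by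
  conv_lhs => rw [← Nat.div_add_mod r (2 ^ k)]
  rw [pow_add, pow_mul, pow_2k hζ, one_pow, one_mul]

lemma zeta_pow_m (hk : 2 ≤ k) (hζ : IsPrimitiveRoot ζ (2 ^ k)) : ζ ^ (2 ^ (k - 1)) = -1 := by
  have h2 : 2 ^ (k - 1) * 2 = 2 ^ k := by
    rw [← pow_succ]; congr 1; omega
  have hsq : (ζ ^ (2 ^ (k - 1))) ^ 2 = 1 := by
    rw [← pow_mul, h2, pow_2k hζ]
  have hne : ζ ^ (2 ^ (k - 1)) ≠ 1 :=
    hζ.pow_ne_one_of_pos_of_lt (by positivity) (by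
      have : 2 ^ (k-1) < 2 ^ k := Nat.pow_lt_pow_right (by norm_num) (by omega)
      exact this)
  have hfac : (ζ ^ (2 ^ (k - 1)) - 1) * (ζ ^ (2 ^ (k - 1)) + 1) = 0 := by
    linear_combination hsq
  rcases mul_eq_zero.mp hfac with h | h
  · exact absurd (by linear_combination h) hne
  · linear_combination h

lemma pow_reduce (hk : 2 ≤ k) (hζ : IsPrimitiveRoot ζ (2 ^ k)) (r : ℕ) :
    ζ ^ r = ((-1 : ℂ)) ^ (r / 2 ^ (k - 1)) * ζ ^ (r % 2 ^ (k - 1)) := by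
  conv_lhs => rw [← Nat.div_add_mod r (2 ^ (k - 1))]
  rw [pow_add, pow_mul, zeta_pow_m hk hζ]

lemma sumInR {ι : Type*} (S : Finset ι) (g : ι → ℂ) (h : ∀ i ∈ S, InR k ζ (g i)) :
    InR k ζ (∑ i ∈ S, g i) := by
  classical
  induction S using Finset.induction_on with
  | empty => exact ⟨fun _ => 0, by simp⟩
  | insert a s hnot ih =>
    obtain ⟨b, hb⟩ := h a (Finset.mem_insert_self a s)
    obtain ⟨b', hb'⟩ := ih (fun i hi => h i (Finset.mem_insert_of_mem hi))
    refine ⟨fun t => b t + b' t, ?_⟩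
    rw [Finset.sum_insert hnot, hb, hb', ← Finset.sum_add_distrib]
    push_cast
    apply Finset.sum_congr rfl; intro t _; ring

lemma monoInR (hk : 2 ≤ k) (hζ : IsPrimitiveRoot ζ (2 ^ k)) (z : ℤ) (r : ℕ) :
    InR k ζ ((z : ℂ) * ζ ^ r) := by
  classical
  refine ⟨fun t => if t = r % 2 ^ (k - 1) then z * (-1 : ℤ) ^ (r / 2 ^ (k - 1)) else 0, ?_⟩
  have hcongr : ∀ t ∈ Finset.range (2 ^ (k - 1)),
      ((if t = r % 2 ^ (k - 1) then z * (-1 : ℤ) ^ (r / 2 ^ (k - 1)) else 0 : ℤ) : ℂ) * ζ ^ t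
      = if t = r % 2 ^ (k - 1) then ((z * (-1 : ℤ) ^ (r / 2 ^ (k - 1)) : ℤ) : ℂ) * ζ ^ t else 0 := by
    intro t _; split <;> simp
  rw [Finset.sum_congr rfl hcongr, Finset.sum_ite_eq' (Finset.range (2 ^ (k - 1)))]
  have hmem : r % 2 ^ (k - 1) ∈ Finset.range (2 ^ (k - 1)) :=
    Finset.mem_range.mpr (Nat.mod_lt _ (by positivity))
  rw [if_pos hmem, pow_reduce hk hζ r]
  push_cast
  ring

lemma zeroInR : InR k ζ 0 := ⟨fun _ => 0, by simp⟩

lemma intInR (hk : 2 ≤ k) (hζ : IsPrimitiveRoot ζ (2 ^ k)) (z : ℤ) : InR k ζ (z : ℂ) := by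
  have := monoInR hk hζ z 0
  simpa using this

lemma addInR {x y : ℂ} (hx : InR k ζ x) (hy : InR k ζ y) : InR k ζ (x + y) := by
  obtain ⟨b, hb⟩ := hx; obtain ⟨b', hb'⟩ := hy
  exact ⟨fun t => b t + b' t, by
    rw [hb, hb', ← Finset.sum_add_distrib]
    push_cast
    exact Finset.sum_congr rfl fun t _ => by ring⟩

lemma mulInR (hk : 2 ≤ k) (hζ : IsPrimitiveRoot ζ (2 ^ k)) {x y : ℂ}
    (hx : InR k ζ x) (hy : InR k ζ y) : InR k ζ (x * y) := by
  obtain ⟨b, hb⟩ := hx; obtain ⟨b', hb'⟩ := hy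
  rw [hb, hb', Finset.sum_mul_sum]
  apply sumInR
  intro t _
  apply sumInR
  intro s _
  have : (b t : ℂ) * ζ ^ t * ((b' s : ℂ) * ζ ^ s) = ((b t * b' s : ℤ) : ℂ) * ζ ^ (t + s) := by
    push_cast; rw [pow_add]; ring
  rw [this]
  exact monoInR hk hζ _ _

lemma subInR (hk : 2 ≤ k) (hζ : IsPrimitiveRoot ζ (2 ^ k)) {x y : ℂ}
    (hx : InR k ζ x) (hy : InR k ζ y) : InR k ζ (x - y) := by
  have : x - y = x + ((-1 : ℤ) : ℂ) * y := by push_cast; ring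
  rw [this]
  exact addInR hx (mulInR hk hζ (intInR hk hζ _) hy)

lemma norm_zeta (hk : 2 ≤ k) (hζ : IsPrimitiveRoot ζ (2 ^ k)) : ‖ζ‖ = 1 :=
  Complex.norm_eq_one_of_pow_eq_one (pow_2k hζ) (by positivity)

lemma conj_zeta (hk : 2 ≤ k) (hζ : IsPrimitiveRoot ζ (2 ^ k)) :
    (starRingEnd ℂ) ζ = ζ ^ (2 ^ k - 1) := by
  have hz : ζ ≠ 0 := hζ.ne_zero (by positivity)
  have h1 : ζ * (starRingEnd ℂ) ζ = 1 := by
    rw [Complex.mul_conj, Complex.normSq_eq_norm_sq,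
      norm_zeta hk hζ]
    norm_num
  have h2 : ζ * ζ ^ (2 ^ k - 1) = 1 := by
    rw [← pow_succ']
    have : 2 ^ k - 1 + 1 = 2 ^ k := by have : 1 ≤ 2 ^ k := Nat.one_le_two_pow; omega
    rw [this, pow_2k hζ]
  exact mul_left_cancel₀ hz (h1.trans h2.symm)

lemma conjInR (hk : 2 ≤ k) (hζ : IsPrimitiveRoot ζ (2 ^ k)) {x : ℂ} (hx : InR k ζ x) :
    InR k ζ ((starRingEnd ℂ) x) := by
  obtain ⟨b, hb⟩ := hx
  rw [hb, map_sum]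
  apply sumInR
  intro t _
  rw [map_mul, map_pow, conj_zeta hk hζ]
  have : (starRingEnd ℂ) ((b t : ℂ)) = ((b t : ℤ) : ℂ) := by
    simp
  rw [this, ← pow_mul]
  exact monoInR hk hζ _ _

lemma uniqR (hk : 2 ≤ k) (hζ : IsPrimitiveRoot ζ (2 ^ k)) (b b' : ℕ → ℤ)
    (h : ∑ t ∈ Finset.range (2 ^ (k - 1)), (b t : ℂ) * ζ ^ t
       = ∑ t ∈ Finset.range (2 ^ (k - 1)), (b' t : ℂ) * ζ ^ t) :
    ∀ t < 2 ^ (k - 1), b t = b' t := by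
  have h0 : ∑ t ∈ Finset.range (2 ^ (k - 1)), ((b t - b' t : ℤ) : ℂ) * ζ ^ t = 0 := by
    have e : ∑ t ∈ Finset.range (2 ^ (k - 1)), ((b t - b' t : ℤ) : ℂ) * ζ ^ t
        = (∑ t ∈ Finset.range (2 ^ (k - 1)), (b t : ℂ) * ζ ^ t)
          - ∑ t ∈ Finset.range (2 ^ (k - 1)), (b' t : ℂ) * ζ ^ t := by
      rw [← Finset.sum_sub_distrib]
      apply Finset.sum_congr rfl; intro t _; push_cast; ring
    rw [e, h, sub_self]
  intro t ht
  have := indep k (by omega) hζ _ h0 t ht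
  omega

end C
section D1
variable {k : ℕ} {ζ : ℂ}

/-- divisibility within the ring -/
def DR (k : ℕ) (ζ : ℂ) (x y : ℂ) : Prop := ∃ z, InR k ζ z ∧ y = x * z

lemma powzInR (hk : 2 ≤ k) (hζ : IsPrimitiveRoot ζ (2 ^ k)) (r : ℕ) : InR k ζ (ζ ^ r) := by
  have := monoInR hk hζ 1 r
  simpa using this

lemma oneInR (hk : 2 ≤ k) (hζ : IsPrimitiveRoot ζ (2 ^ k)) : InR k ζ 1 := by
  have := intInR hk hζ 1; simpa using this

lemma prodInR (hk : 2 ≤ k) (hζ : IsPrimitiveRoot ζ (2 ^ k)) {ι : Type*} (S : Finset ι)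
    (g : ι → ℂ) (h : ∀ i ∈ S, InR k ζ (g i)) : InR k ζ (∏ i ∈ S, g i) := by
  classical
  induction S using Finset.induction_on with
  | empty => simpa using oneInR hk hζ
  | insert a s hnot ih =>
    rw [Finset.prod_insert hnot]
    exact mulInR hk hζ (h a (Finset.mem_insert_self a s))
      (ih fun i hi => h i (Finset.mem_insert_of_mem hi))

lemma powInR (hk : 2 ≤ k) (hζ : IsPrimitiveRoot ζ (2 ^ k)) {x : ℂ} (hx : InR k ζ x) (r : ℕ) :
    InR k ζ (x ^ r) := by
  induction r with
  | zero => simpa using oneInR hk hζ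
  | succ r ih => rw [pow_succ]; exact mulInR hk hζ ih hx

lemma geomR (j : ℕ) : (1 : ℂ) - ζ ^ j = (1 - ζ) * ∑ i ∈ Finset.range j, ζ ^ i := by
  have := geom_sum_mul ζ j
  linear_combination this

lemma lam_ne (hk : 2 ≤ k) (hζ : IsPrimitiveRoot ζ (2 ^ k)) : (1 : ℂ) - ζ ≠ 0 := by
  have : ζ ≠ 1 := hζ.ne_one (by
    have : (2:ℕ) ^ 1 ≤ 2 ^ k := Nat.pow_le_pow_right (by norm_num) (by omega)
    omega)
  intro h
  exact this (by linear_combination -h)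

lemma prim_roots_eq (hk : 2 ≤ k) (hζ : IsPrimitiveRoot ζ (2 ^ k)) :
    primitiveRoots (2 ^ k) ℂ
      = (Finset.range (2 ^ (k - 1))).image (fun j => ζ ^ (2 * j + 1)) := by
  have hmlt : ∀ j < 2 ^ (k - 1), 2 * j + 1 < 2 ^ k := by
    intro j hj
    have : 2 * 2 ^ (k - 1) = 2 ^ k := by
      rw [← pow_succ']; congr 1; omega
    omega
  have hinj : ∀ x ∈ Finset.range (2 ^ (k - 1)), ∀ y ∈ Finset.range (2 ^ (k - 1)),
      ζ ^ (2 * x + 1) = ζ ^ (2 * y + 1) → x = y := by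
    intro x hx y hy hxy
    have := hζ.pow_inj (hmlt x (Finset.mem_range.mp hx)) (hmlt y (Finset.mem_range.mp hy)) hxy
    omega
  symm
  apply Finset.eq_of_subset_of_card_le
  · intro μ hμ
    obtain ⟨j, hj, rfl⟩ := Finset.mem_image.mp hμ
    rw [mem_primitiveRoots (by positivity)]
    apply hζ.pow_of_coprime
    have : Odd (2 * j + 1) := odd_two_mul_add_one j
    exact (Nat.coprime_two_right.mpr this).pow_right k
  · rw [Finset.card_image_of_injOn hinj, Finset.card_range,
      hζ.card_primitiveRoots, Nat.totient_prime_pow Nat.prime_two (by omega)]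
    simp

lemma prod_odd_eq_two (hk : 2 ≤ k) (hζ : IsPrimitiveRoot ζ (2 ^ k)) :
    ∏ j ∈ Finset.range (2 ^ (k - 1)), ((1 : ℂ) - ζ ^ (2 * j + 1)) = 2 := by
  have hc : Polynomial.cyclotomic (2 ^ k) ℂ
      = ∏ μ ∈ primitiveRoots (2 ^ k) ℂ, (Polynomial.X - Polynomial.C μ) :=
    Polynomial.cyclotomic_eq_prod_X_sub_primitiveRoots hζ
  have hk' : 2 ^ k = 2 ^ ((k - 1) + 1) := by congr 1; omega
  have hgeom : Polynomial.cyclotomic (2 ^ k) ℂ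
      = ∑ i ∈ Finset.range 2, ((Polynomial.X : Polynomial ℂ) ^ 2 ^ (k - 1)) ^ i := by
    rw [hk']; exact Polynomial.cyclotomic_prime_pow_eq_geom_sum Nat.prime_two
  have h1 : Polynomial.eval 1 (Polynomial.cyclotomic (2 ^ k) ℂ) = 2 := by
    rw [hgeom]; simp [Finset.sum_range_succ]; norm_num
  have h2 : Polynomial.eval 1 (Polynomial.cyclotomic (2 ^ k) ℂ)
      = ∏ j ∈ Finset.range (2 ^ (k - 1)), ((1 : ℂ) - ζ ^ (2 * j + 1)) := by
    rw [hc, Polynomial.eval_prod, prim_roots_eq hk hζ]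
    rw [Finset.prod_image]
    · simp
    · intro x hx y hy hxy
      have hmlt : ∀ j < 2 ^ (k - 1), 2 * j + 1 < 2 ^ k := by
        intro j hj
        have : 2 * 2 ^ (k - 1) = 2 ^ k := by rw [← pow_succ']; congr 1; omega
        omega
      have := hζ.pow_inj (hmlt x (Finset.mem_range.mp hx)) (hmlt y (Finset.mem_range.mp hy)) hxy
      omega
  rw [← h2, h1]

end D1
section D2
variable {k : ℕ} {ζ : ℂ}

/-- the unit `U` with `2 = (1-ζ)^m * U` -/
noncomputable def Uu (k : ℕ) (ζ : ℂ) : ℂ :=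
  ∏ j ∈ Finset.range (2 ^ (k - 1)), ∑ i ∈ Finset.range (2 * j + 1), ζ ^ i

noncomputable def Vv (k : ℕ) (ζ : ℂ) : ℂ :=
  ∏ j ∈ Finset.range (2 ^ (k - 1)),
    ∑ i ∈ Finset.range (((2 * j + 1 : ℕ) : ZMod (2 ^ k))⁻¹.val), ζ ^ ((2 * j + 1) * i)

lemma UInR (hk : 2 ≤ k) (hζ : IsPrimitiveRoot ζ (2 ^ k)) : InR k ζ (Uu k ζ) := by
  apply prodInR hk hζ
  intro j _
  exact sumInR _ _ fun i _ => powzInR hk hζ i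

lemma VInR (hk : 2 ≤ k) (hζ : IsPrimitiveRoot ζ (2 ^ k)) : InR k ζ (Vv k ζ) := by
  apply prodInR hk hζ
  intro j _
  exact sumInR _ _ fun i _ => powzInR hk hζ _

lemma inv_val_mod (hk : 2 ≤ k) (j : ℕ) :
    ((2 * j + 1) * ((2 * j + 1 : ℕ) : ZMod (2 ^ k))⁻¹.val) % 2 ^ k = 1 := by
  haveI : NeZero (2 ^ k) := ⟨by positivity⟩
  haveI : Fact (1 < 2 ^ k) := ⟨by
    have : (2:ℕ) ^ 1 ≤ 2 ^ k := Nat.pow_le_pow_right (by norm_num) (by omega); omega⟩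
  have hunit : IsUnit ((2 * j + 1 : ℕ) : ZMod (2 ^ k)) := by
    rw [ZMod.isUnit_iff_coprime]
    exact (Nat.coprime_two_right.mpr (odd_two_mul_add_one j)).pow_right k
  have h1 : ((2 * j + 1 : ℕ) : ZMod (2 ^ k)) * ((2 * j + 1 : ℕ) : ZMod (2 ^ k))⁻¹ = 1 :=
    ZMod.mul_inv_of_unit _ hunit
  have h2 : (((2 * j + 1) * ((2 * j + 1 : ℕ) : ZMod (2 ^ k))⁻¹.val : ℕ) : ZMod (2 ^ k)) = 1 := by
    rw [Nat.cast_mul, ZMod.natCast_val, ZMod.cast_id]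
    exact h1
  have := congrArg ZMod.val h2
  rwa [ZMod.val_natCast, ZMod.val_one] at this

lemma UV_one (hk : 2 ≤ k) (hζ : IsPrimitiveRoot ζ (2 ^ k)) : Uu k ζ * Vv k ζ = 1 := by
  rw [Uu, Vv, ← Finset.prod_mul_distrib]
  apply Finset.prod_eq_one
  intro j _
  set r := ((2 * j + 1 : ℕ) : ZMod (2 ^ k))⁻¹.val with hr
  have hUj : (1 - ζ) * (∑ i ∈ Finset.range (2 * j + 1), ζ ^ i) = 1 - ζ ^ (2 * j + 1) :=
    (geomR _).symm
  have hVj : (1 - ζ ^ (2 * j + 1)) * (∑ i ∈ Finset.range r, ζ ^ ((2 * j + 1) * i)) = 1 - ζ := by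
    have hg : (1 : ℂ) - (ζ ^ (2 * j + 1)) ^ r
        = (1 - ζ ^ (2 * j + 1)) * ∑ i ∈ Finset.range r, (ζ ^ (2 * j + 1)) ^ i := geomR r
    have hpow : (ζ ^ (2 * j + 1)) ^ r = ζ := by
      rw [← pow_mul, pow_mod2k hζ, inv_val_mod hk j, pow_one]
    have hterm : ∀ i, (ζ ^ (2 * j + 1)) ^ i = ζ ^ ((2 * j + 1) * i) := fun i => (pow_mul ζ _ i).symm
    rw [← Finset.sum_congr rfl (fun i _ => hterm i), ← hg, hpow]
  have hlam := lam_ne hk hζ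
  have := congrArg (fun z => z * (∑ i ∈ Finset.range r, ζ ^ ((2 * j + 1) * i))) hUj
  -- (1-ζ) * Uj * Vj = (1 - ζ^(2j+1)) * Vj = 1 - ζ
  have key : (1 - ζ) * ((∑ i ∈ Finset.range (2 * j + 1), ζ ^ i)
      * (∑ i ∈ Finset.range r, ζ ^ ((2 * j + 1) * i))) = (1 - ζ) * 1 := by
    rw [mul_one, ← mul_assoc, this, hVj]
  exact mul_left_cancel₀ hlam key

lemma two_eq_lam_pow (hk : 2 ≤ k) (hζ : IsPrimitiveRoot ζ (2 ^ k)) :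
    (2 : ℂ) = (1 - ζ) ^ (2 ^ (k - 1)) * Uu k ζ := by
  have h2 := prod_odd_eq_two hk hζ
  have : ∏ j ∈ Finset.range (2 ^ (k - 1)), ((1 : ℂ) - ζ ^ (2 * j + 1))
      = ∏ j ∈ Finset.range (2 ^ (k - 1)),
          ((1 - ζ) * ∑ i ∈ Finset.range (2 * j + 1), ζ ^ i) :=
    Finset.prod_congr rfl fun j _ => geomR _
  rw [this] at h2
  rw [Finset.prod_mul_distrib, Finset.prod_const, Finset.card_range] at h2
  rw [← h2]; rfl

lemma lam_dvd_two (hk : 2 ≤ k) (hζ : IsPrimitiveRoot ζ (2 ^ k)) : DR k ζ (1 - ζ) 2 := by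
  refine ⟨(1 - ζ) ^ (2 ^ (k - 1) - 1) * Uu k ζ, ?_, ?_⟩
  · refine mulInR hk hζ (powInR hk hζ (subInR hk hζ (oneInR hk hζ) ?_) _) (UInR hk hζ)
    simpa using powzInR hk hζ 1
  · rw [two_eq_lam_pow hk hζ, ← mul_assoc, ← pow_succ']
    congr 2
    have : (1:ℕ) ≤ 2 ^ (k - 1) := Nat.one_le_two_pow
    omega

lemma residueR (hk : 2 ≤ k) (hζ : IsPrimitiveRoot ζ (2 ^ k)) {x : ℂ} (hx : InR k ζ x) :
    ∃ c : ℤ, (c = 0 ∨ c = 1) ∧ DR k ζ (1 - ζ) (x - (c : ℂ)) := by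
  obtain ⟨b, rfl⟩ := hx
  set m := 2 ^ (k - 1) with hm
  set S : ℤ := ∑ t ∈ Finset.range m, b t with hS
  have hstep : (∑ t ∈ Finset.range m, (b t : ℂ) * ζ ^ t) - (S : ℂ)
      = (1 - ζ) * ∑ t ∈ Finset.range m, (b t : ℂ) * (-(∑ i ∈ Finset.range t, ζ ^ i)) := by
    rw [hS]
    push_cast
    rw [← Finset.sum_sub_distrib, Finset.mul_sum]
    apply Finset.sum_congr rfl
    intro t _
    have : (ζ:ℂ) ^ t - 1 = -((1:ℂ) - ζ ^ t) := by ring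
    have hgt := geomR (ζ := ζ) t
    calc (b t : ℂ) * ζ ^ t - (b t : ℂ) = (b t : ℂ) * (ζ ^ t - 1) := by ring
    _ = (b t : ℂ) * (-((1:ℂ) - ζ ^ t)) := by rw [this]
    _ = (1 - ζ) * ((b t : ℂ) * (-(∑ i ∈ Finset.range t, ζ ^ i))) := by rw [hgt]; ring
  obtain ⟨w2, hw2R, hw2⟩ := lam_dvd_two hk hζ
  refine ⟨S % 2, ?_, ?_⟩
  · omega
  · refine ⟨(∑ t ∈ Finset.range m, (b t : ℂ) * (-(∑ i ∈ Finset.range t, ζ ^ i)))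
      + ((S / 2 : ℤ) : ℂ) * w2, ?_, ?_⟩
    · apply addInR
      · exact sumInR _ _ fun t _ => mulInR hk hζ (intInR hk hζ _)
          (by
            have : InR k ζ (-(∑ i ∈ Finset.range t, ζ ^ i)) := by
              have hs : InR k ζ (∑ i ∈ Finset.range t, ζ ^ i) :=
                sumInR _ _ fun i _ => powzInR hk hζ i
              have := mulInR hk hζ (intInR hk hζ (-1)) hs
              simpa using this
            exact this)
      · exact mulInR hk hζ (intInR hk hζ _) hw2R
    · have hSdecomp : (S : ℂ) = 2 * ((S / 2 : ℤ) : ℂ) + ((S % 2 : ℤ) : ℂ) := by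
        exact_mod_cast congrArg (fun z : ℤ => (z : ℂ)) (show S = 2 * (S / 2) + S % 2 by omega)
      rw [mul_add, ← hstep]
      linear_combination hSdecomp + ((S / 2 : ℤ) : ℂ) * hw2
end D2
section D3
variable {k : ℕ} {ζ : ℂ}

lemma one_ne_two_mul (hk : 2 ≤ k) (hζ : IsPrimitiveRoot ζ (2 ^ k)) {y : ℂ}
    (hy : InR k ζ y) : (1 : ℂ) ≠ 2 * y := by
  intro h
  obtain ⟨e, rfl⟩ := hy
  have hone : (1 : ℂ) = ∑ t ∈ Finset.range (2 ^ (k - 1)),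
      (((fun t => if t = 0 then (1:ℤ) else 0) t : ℤ) : ℂ) * ζ ^ t := by
    rw [Finset.sum_eq_single 0]
    · simp
    · intro s _ hs; simp [hs]
    · intro h0; exact absurd (Finset.mem_range.mpr (by positivity)) h0
  have htwo : (2 : ℂ) * ∑ t ∈ Finset.range (2 ^ (k - 1)), (e t : ℂ) * ζ ^ t
      = ∑ t ∈ Finset.range (2 ^ (k - 1)), ((2 * e t : ℤ) : ℂ) * ζ ^ t := by
    rw [Finset.mul_sum]
    apply Finset.sum_congr rfl; intro t _; push_cast; ring
  rw [hone, htwo] at h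
  have := uniqR hk hζ _ _ h 0 (by positivity)
  simp at this
  omega

lemma lam_not_dvd_one (hk : 2 ≤ k) (hζ : IsPrimitiveRoot ζ (2 ^ k)) :
    ¬ DR k ζ (1 - ζ) 1 := by
  rintro ⟨w, hwR, hw⟩
  have h1 : (1 : ℂ) = ((1 - ζ) * w) ^ (2 ^ (k - 1)) := by rw [← hw, one_pow]
  rw [mul_pow] at h1
  have hlam : (1 - ζ) ^ (2 ^ (k - 1)) = 2 * Vv k ζ := by
    have h2 := two_eq_lam_pow hk hζ
    have hUV := UV_one hk hζ
    calc (1 - ζ) ^ (2 ^ (k - 1)) = (1 - ζ) ^ (2 ^ (k - 1)) * (Uu k ζ * Vv k ζ) := by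
          rw [hUV, mul_one]
    _ = ((1 - ζ) ^ (2 ^ (k - 1)) * Uu k ζ) * Vv k ζ := by ring
    _ = 2 * Vv k ζ := by rw [← h2]
  rw [hlam] at h1
  have : (1 : ℂ) = 2 * (Vv k ζ * w ^ (2 ^ (k - 1))) := by rw [h1]; ring
  exact one_ne_two_mul hk hζ (mulInR hk hζ (VInR hk hζ) (powInR hk hζ hwR _)) this

lemma dvd_of_res_zero (hk : 2 ≤ k) (hζ : IsPrimitiveRoot ζ (2 ^ k)) {x : ℂ} (hx : InR k ζ x)
    (h : ¬ DR k ζ (1 - ζ) x) : ∃ z, InR k ζ z ∧ x = 1 + (1 - ζ) * z := by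
  obtain ⟨c, hc01, z, hzR, hz⟩ := residueR hk hζ hx
  rcases hc01 with rfl | rfl
  · exfalso; apply h; exact ⟨z, hzR, by simpa using hz⟩
  · exact ⟨z, hzR, by push_cast at hz; linear_combination hz⟩

lemma lam_prime (hk : 2 ≤ k) (hζ : IsPrimitiveRoot ζ (2 ^ k)) {x y : ℂ}
    (hx : InR k ζ x) (hy : InR k ζ y) (h : DR k ζ (1 - ζ) (x * y)) :
    DR k ζ (1 - ζ) x ∨ DR k ζ (1 - ζ) y := by
  by_contra hc
  push_neg at hc
  obtain ⟨z1, hz1R, hz1⟩ := dvd_of_res_zero hk hζ hx hc.1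
  obtain ⟨z2, hz2R, hz2⟩ := dvd_of_res_zero hk hζ hy hc.2
  obtain ⟨w, hwR, hw⟩ := h
  apply lam_not_dvd_one hk hζ
  refine ⟨w - z1 - z2 - (1 - ζ) * z1 * z2, ?_, ?_⟩
  · exact subInR hk hζ (subInR hk hζ (subInR hk hζ hwR hz1R) hz2R)
      (mulInR hk hζ (mulInR hk hζ (subInR hk hζ (oneInR hk hζ)
        (by simpa using powzInR hk hζ 1)) hz1R) hz2R)
  · have : x * y = (1 + (1 - ζ) * z1) * (1 + (1 - ζ) * z2) := by rw [hz1, hz2]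
    rw [this] at hw
    linear_combination hw

lemma lam_dvd_mul_right (hk : 2 ≤ k) (hζ : IsPrimitiveRoot ζ (2 ^ k)) {x y : ℂ}
    (hy : InR k ζ y) (h : DR k ζ (1 - ζ) x) : DR k ζ (1 - ζ) (x * y) := by
  obtain ⟨z, hzR, hz⟩ := h
  exact ⟨z * y, mulInR hk hζ hzR hy, by rw [hz]; ring⟩
end D3
section D4
variable {k : ℕ} {ζ : ℂ}

lemma conj_pow_mul (hk : 2 ≤ k) (hζ : IsPrimitiveRoot ζ (2 ^ k)) {t s : ℕ}
    (ht : t < 2 ^ (k - 1)) (hs : s < 2 ^ (k - 1)) :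
    ζ ^ t * (starRingEnd ℂ) (ζ ^ s)
      = (((if s ≤ t then (1 : ℤ) else -1) : ℤ) : ℂ)
        * ζ ^ (if s ≤ t then t - s else 2 ^ (k - 1) - (s - t)) := by
  have hz : ζ ≠ 0 := hζ.ne_zero (by positivity)
  have hzs : ζ ^ s ≠ 0 := pow_ne_zero _ hz
  have hcs : (starRingEnd ℂ) (ζ ^ s) * ζ ^ s = 1 := by
    rw [mul_comm, Complex.mul_conj, Complex.normSq_eq_norm_sq,
      norm_pow, norm_zeta hk hζ]
    norm_num
  apply mul_right_cancel₀ hzs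
  rw [mul_assoc, hcs, mul_one]
  by_cases h : s ≤ t
  · rw [if_pos h, if_pos h]
    rw [mul_assoc, ← pow_add]
    have : t - s + s = t := by omega
    rw [this]
    push_cast; ring
  · rw [if_neg h, if_neg h]
    rw [mul_assoc, ← pow_add]
    have he : 2 ^ (k - 1) - (s - t) + s = 2 ^ (k - 1) + t := by omega
    rw [he, pow_add, zeta_pow_m hk hζ]
    push_cast; ring

/-- the key function for regrouping `α * conj α` -/
def keyf (k : ℕ) (p : ℕ × ℕ) : ℕ :=
  if p.2 ≤ p.1 then p.1 - p.2 else 2 ^ (k - 1) - (p.2 - p.1)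

lemma alpha_mul_conj (hk : 2 ≤ k) (hζ : IsPrimitiveRoot ζ (2 ^ k)) (b : ℕ → ℤ) :
    (∑ t ∈ Finset.range (2 ^ (k - 1)), (b t : ℂ) * ζ ^ t)
      * (starRingEnd ℂ) (∑ t ∈ Finset.range (2 ^ (k - 1)), (b t : ℂ) * ζ ^ t)
    = ∑ d ∈ Finset.range (2 ^ (k - 1)),
        ((∑ p ∈ (Finset.range (2 ^ (k - 1)) ×ˢ Finset.range (2 ^ (k - 1))).filter
            (fun p => keyf k p = d),
          (if p.2 ≤ p.1 then (1 : ℤ) else -1) * b p.1 * b p.2 : ℤ) : ℂ) * ζ ^ d := by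
  set m := 2 ^ (k - 1) with hm
  have hmpos : 0 < m := by positivity
  rw [map_sum, Finset.sum_mul_sum]
  have hterm : ∀ p ∈ Finset.range m ×ˢ Finset.range m,
      (b p.1 : ℂ) * ζ ^ p.1 * ((starRingEnd ℂ) ((b p.2 : ℂ) * ζ ^ p.2))
      = (((if p.2 ≤ p.1 then (1 : ℤ) else -1) * b p.1 * b p.2 : ℤ) : ℂ) * ζ ^ (keyf k p) := by
    intro p hp
    obtain ⟨h1, h2⟩ := Finset.mem_product.mp hp
    rw [map_mul]
    have hcb : (starRingEnd ℂ) ((b p.2 : ℂ)) = (b p.2 : ℂ) := by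
      simp
    rw [hcb]
    have := conj_pow_mul hk hζ (Finset.mem_range.mp h1) (Finset.mem_range.mp h2)
    calc (b p.1 : ℂ) * ζ ^ p.1 * ((b p.2 : ℂ) * (starRingEnd ℂ) (ζ ^ p.2))
        = (b p.1 : ℂ) * (b p.2 : ℂ) * (ζ ^ p.1 * (starRingEnd ℂ) (ζ ^ p.2)) := by ring
      _ = (b p.1 : ℂ) * (b p.2 : ℂ)
            * ((((if p.2 ≤ p.1 then (1 : ℤ) else -1) : ℤ) : ℂ) * ζ ^ (keyf k p)) := by
            rw [this]; rfl
      _ = (((if p.2 ≤ p.1 then (1 : ℤ) else -1) * b p.1 * b p.2 : ℤ) : ℂ) * ζ ^ (keyf k p) := by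
            push_cast; ring
  rw [← Finset.sum_product']
  rw [Finset.sum_congr rfl hterm]
  have hmaps : ∀ p ∈ Finset.range m ×ˢ Finset.range m, keyf k p ∈ Finset.range m := by
    intro p hp
    obtain ⟨h1, h2⟩ := Finset.mem_product.mp hp
    have h1' := Finset.mem_range.mp h1
    have h2' := Finset.mem_range.mp h2
    rw [Finset.mem_range]
    unfold keyf
    split <;> omega
  rw [← Finset.sum_fiberwise_of_maps_to hmaps]
  apply Finset.sum_congr rfl
  intro d _
  rw [Int.cast_sum, Finset.sum_mul]
  apply Finset.sum_congr rfl
  intro p hp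
  have := (Finset.mem_filter.mp hp).2
  rw [this]

lemma sum_sq_eq (hk : 2 ≤ k) (hζ : IsPrimitiveRoot ζ (2 ^ k)) (b : ℕ → ℤ) (M : ℤ)
    (h : (∑ t ∈ Finset.range (2 ^ (k - 1)), (b t : ℂ) * ζ ^ t)
      * (starRingEnd ℂ) (∑ t ∈ Finset.range (2 ^ (k - 1)), (b t : ℂ) * ζ ^ t) = (M : ℂ)) :
    ∑ t ∈ Finset.range (2 ^ (k - 1)), (b t) ^ 2 = M := by
  set m := 2 ^ (k - 1) with hm
  have hmpos : 0 < m := by positivity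
  rw [alpha_mul_conj hk hζ b] at h
  have hMrep : (M : ℂ) = ∑ t ∈ Finset.range m,
      (((fun t => if t = 0 then M else 0) t : ℤ) : ℂ) * ζ ^ t := by
    rw [Finset.sum_eq_single 0]
    · simp
    · intro s _ hs; simp [hs]
    · intro h0; exact absurd (Finset.mem_range.mpr hmpos) h0
  rw [hMrep] at h
  have h0 := uniqR hk hζ _ _ h 0 hmpos
  simp at h0
  rw [← h0]
  -- the fiber over 0 is the diagonal
  have hfd : (Finset.range m ×ˢ Finset.range m).filter (fun p => keyf k p = 0)
      = (Finset.range m).image (fun t => (t, t)) := by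
    ext p
    simp only [Finset.mem_filter, Finset.mem_product, Finset.mem_range, Finset.mem_image]
    constructor
    · rintro ⟨⟨h1, h2⟩, hkey⟩
      refine ⟨p.1, h1, ?_⟩
      unfold keyf at hkey
      have : p.1 = p.2 := by
        by_cases hle : p.2 ≤ p.1
        · rw [if_pos hle] at hkey; omega
        · rw [if_neg hle] at hkey; omega
      rw [Prod.ext_iff]; exact ⟨rfl, this⟩
    · rintro ⟨t, ht, rfl⟩
      refine ⟨⟨ht, ht⟩, ?_⟩
      unfold keyf
      simp
  rw [hfd, Finset.sum_image (by intro x _ y _ hxy; exact (Prod.ext_iff.mp hxy).1)]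
  apply Finset.sum_congr rfl
  intro t _
  simp [sq]

lemma conj_lam (hk : 2 ≤ k) (hζ : IsPrimitiveRoot ζ (2 ^ k)) :
    (starRingEnd ℂ) (1 - ζ) = (1 - ζ) * (-ζ ^ (2 ^ k - 1)) := by
  rw [map_sub, map_one, conj_zeta hk hζ]
  have h2k : ζ ^ (2 ^ k - 1) * ζ = 1 := by
    rw [← pow_succ]
    have : 2 ^ k - 1 + 1 = 2 ^ k := by have : (1:ℕ) ≤ 2 ^ k := Nat.one_le_two_pow; omega
    rw [this, pow_2k hζ]
  linear_combination -h2k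

lemma lam_pow_dvd (hk : 2 ≤ k) (hζ : IsPrimitiveRoot ζ (2 ^ k)) {α : ℂ} (hαR : InR k ζ α)
    (N : ℕ) (hprod : α * (starRingEnd ℂ) α = (4 : ℂ) ^ (N + 1)) :
    ∀ c ≤ 2 ^ (k - 1), DR k ζ ((1 - ζ) ^ c) α := by
  set m := 2 ^ (k - 1) with hm
  have hlam := lam_ne hk hζ
  have hz : ζ ≠ 0 := hζ.ne_zero (by positivity)
  intro c hc
  induction c with
  | zero => exact ⟨α, hαR, by simp⟩
  | succ c ih =>
    obtain ⟨β, hβR, hβ⟩ := ih (by omega)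
    -- conj α = lam^c * μ^c * conj β
    set μ : ℂ := -ζ ^ (2 ^ k - 1) with hμ
    have hμunit : μ * (-ζ) = 1 := by
      rw [hμ]
      have : ζ ^ (2 ^ k - 1) * ζ = 1 := by
        rw [← pow_succ]
        have h1 : 2 ^ k - 1 + 1 = 2 ^ k := by have : (1:ℕ) ≤ 2 ^ k := Nat.one_le_two_pow; omega
        rw [h1, pow_2k hζ]
      linear_combination this
    have hconjα : (starRingEnd ℂ) α = (1 - ζ) ^ c * μ ^ c * (starRingEnd ℂ) β := by
      rw [hβ, map_mul, map_pow, conj_lam hk hζ, mul_pow]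
    have htwo := two_eq_lam_pow hk hζ
    have h4 : (4 : ℂ) ^ (N + 1) = (1 - ζ) ^ (m * (2 * N + 2)) * Uu k ζ ^ (2 * N + 2) := by
      have : (4 : ℂ) ^ (N + 1) = 2 ^ (2 * N + 2) := by
        rw [show (4:ℂ) = 2^2 by norm_num, ← pow_mul]; ring_nf
      rw [this, htwo, mul_pow, ← pow_mul]
    have hlt : 2 * c < m * (2 * N + 2) := by
      have h2m : 2 * m ≤ m * (2 * N + 2) := by nlinarith
      omega
    have hkey : (1 - ζ) ^ (2 * c) * (μ ^ c * (β * (starRingEnd ℂ) β))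
        = (1 - ζ) ^ (2 * c) * ((1 - ζ) ^ (m * (2 * N + 2) - 2 * c) * Uu k ζ ^ (2 * N + 2)) := by
      have he : 2 * c + (m * (2 * N + 2) - 2 * c) = m * (2 * N + 2) := by omega
      have hpow : (1 - ζ) ^ (2 * c) * (1 - ζ) ^ (m * (2 * N + 2) - 2 * c)
          = (1 - ζ) ^ (m * (2 * N + 2)) := by rw [← pow_add, he]
      calc (1 - ζ) ^ (2 * c) * (μ ^ c * (β * (starRingEnd ℂ) β))
          = α * (starRingEnd ℂ) α := by rw [hconjα, hβ]; ring
      _ = (1 - ζ) ^ (m * (2 * N + 2)) * Uu k ζ ^ (2 * N + 2) := by rw [hprod, h4]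
      _ = ((1 - ζ) ^ (2 * c) * (1 - ζ) ^ (m * (2 * N + 2) - 2 * c)) * Uu k ζ ^ (2 * N + 2) := by
            rw [hpow]
      _ = (1 - ζ) ^ (2 * c) * ((1 - ζ) ^ (m * (2 * N + 2) - 2 * c) * Uu k ζ ^ (2 * N + 2)) := by
            ring
    have hcancel : μ ^ c * (β * (starRingEnd ℂ) β)
        = (1 - ζ) ^ (m * (2 * N + 2) - 2 * c) * Uu k ζ ^ (2 * N + 2) :=
      mul_left_cancel₀ (pow_ne_zero _ hlam) hkey
    have hepos : 1 ≤ m * (2 * N + 2) - 2 * c := by omega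
    have hdvd : DR k ζ (1 - ζ) ((μ ^ c * β) * (starRingEnd ℂ) β) := by
      refine ⟨(1 - ζ) ^ (m * (2 * N + 2) - 2 * c - 1) * Uu k ζ ^ (2 * N + 2), ?_, ?_⟩
      · exact mulInR hk hζ (powInR hk hζ (subInR hk hζ (oneInR hk hζ)
          (by simpa using powzInR hk hζ 1)) _) (powInR hk hζ (UInR hk hζ) _)
      · rw [mul_assoc, hcancel, ← mul_assoc, ← pow_succ']
        congr 2
        omega
    have hμR : InR k ζ μ := by
      rw [hμ]
      have := mulInR hk hζ (intInR hk hζ (-1)) (powzInR hk hζ (2 ^ k - 1))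
      simpa using this
    have hμcR : InR k ζ (μ ^ c) := powInR hk hζ hμR c
    have hβdvd : DR k ζ (1 - ζ) β := by
      rcases lam_prime hk hζ (mulInR hk hζ hμcR hβR) (conjInR hk hζ hβR) hdvd with h | h
      · obtain ⟨z, hzR, hz⟩ := h
        refine ⟨(-ζ) ^ c * z, mulInR hk hζ (powInR hk hζ (by
          have := mulInR hk hζ (intInR hk hζ (-1)) (powzInR hk hζ 1)
          simpa using this) c) hzR, ?_⟩
        have hμc1 : μ ^ c * (-ζ) ^ c = 1 := by rw [← mul_pow, hμunit, one_pow]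
        calc β = (μ ^ c * (-ζ) ^ c) * β := by rw [hμc1, one_mul]
        _ = (-ζ) ^ c * (μ ^ c * β) := by ring
        _ = (-ζ) ^ c * ((1 - ζ) * z) := by rw [hz]
        _ = (1 - ζ) * ((-ζ) ^ c * z) := by ring
      · obtain ⟨z, hzR, hz⟩ := h
        have := congrArg (starRingEnd ℂ) hz
        rw [Complex.conj_conj, map_mul, conj_lam hk hζ] at this
        exact ⟨μ * (starRingEnd ℂ) z, mulInR hk hζ hμR (conjInR hk hζ hzR), by
          rw [this]; ring⟩
    obtain ⟨w, hwR, hw⟩ := hβdvd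
    exact ⟨w, hwR, by rw [hβ, hw, pow_succ]; ring⟩

lemma alpha_classify (hk : 2 ≤ k) (hζ : IsPrimitiveRoot ζ (2 ^ k)) :
    ∀ (N : ℕ) (b : ℕ → ℤ),
      ((∑ t ∈ Finset.range (2 ^ (k - 1)), (b t : ℂ) * ζ ^ t)
        * (starRingEnd ℂ) (∑ t ∈ Finset.range (2 ^ (k - 1)), (b t : ℂ) * ζ ^ t) = (4 : ℂ) ^ N) →
      ∃ t₀ < 2 ^ (k - 1), ∃ ε : ℤ, (ε = 1 ∨ ε = -1) ∧
        ∀ t < 2 ^ (k - 1), b t = if t = t₀ then ε * 2 ^ N else 0 := by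
  set m := 2 ^ (k - 1) with hm
  have hmpos : 0 < m := by positivity
  intro N
  induction N with
  | zero =>
    intro b h
    have hsq : ∑ t ∈ Finset.range m, (b t) ^ 2 = 1 := by
      apply sum_sq_eq hk hζ b 1
      rw [h]; norm_num
    have hex : ∃ t₀ ∈ Finset.range m, b t₀ ≠ 0 := by
      by_contra hno
      push_neg at hno
      rw [Finset.sum_eq_zero (fun t ht => by rw [hno t ht]; ring)] at hsq
      omega
    obtain ⟨t₀, ht₀m, ht₀⟩ := hex
    have hsplit : b t₀ ^ 2 + ∑ t ∈ (Finset.range m).erase t₀, (b t) ^ 2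
        = ∑ t ∈ Finset.range m, (b t) ^ 2 :=
      Finset.add_sum_erase _ (fun t => (b t) ^ 2) ht₀m
    have habs : 1 ≤ |b t₀| := Int.one_le_abs (by omega)
    have ht₀sq : 1 ≤ (b t₀) ^ 2 := by nlinarith [sq_abs (b t₀), abs_nonneg (b t₀)]
    have hrest : ∑ t ∈ (Finset.range m).erase t₀, (b t) ^ 2 = 0 := by
      have hnonneg : ∀ t ∈ (Finset.range m).erase t₀, 0 ≤ (b t) ^ 2 := fun t _ => sq_nonneg _
      have := Finset.sum_nonneg hnonneg
      omega
    have hb₀ : (b t₀) ^ 2 = 1 := by omega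
    have hzero : ∀ t ∈ (Finset.range m).erase t₀, b t = 0 := by
      intro t ht
      have := (Finset.sum_eq_zero_iff_of_nonneg (fun t _ => sq_nonneg (b t))).mp hrest t ht
      nlinarith [this]
    refine ⟨t₀, Finset.mem_range.mp ht₀m, b t₀, ?_, ?_⟩
    · have hfac : (b t₀ - 1) * (b t₀ + 1) = 0 := by nlinarith [hb₀]
      rcases mul_eq_zero.mp hfac with hf1 | hf1
      · exact Or.inl (by linarith)
      · exact Or.inr (by linarith)
    · intro t htm
      by_cases hteq : t = t₀
      · rw [if_pos hteq, hteq]; ring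
      · rw [if_neg hteq]
        exact hzero t (Finset.mem_erase.mpr ⟨hteq, Finset.mem_range.mpr htm⟩)
  | succ N ih =>
    intro b h
    set α : ℂ := ∑ t ∈ Finset.range m, (b t : ℂ) * ζ ^ t with hα
    have hαR : InR k ζ α := ⟨b, rfl⟩
    have hdvd := lam_pow_dvd hk hζ hαR N h m le_rfl
    obtain ⟨β, hβR, hβ⟩ := hdvd
    have hlamm : (1 - ζ) ^ m = 2 * Vv k ζ := by
      have h2 := two_eq_lam_pow hk hζ
      have hUV := UV_one hk hζ
      calc (1 - ζ) ^ m = (1 - ζ) ^ m * (Uu k ζ * Vv k ζ) := by rw [hUV, mul_one]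
      _ = ((1 - ζ) ^ m * Uu k ζ) * Vv k ζ := by ring
      _ = 2 * Vv k ζ := by rw [← h2]
    set α' : ℂ := Vv k ζ * β with hα'
    have hα2 : α = 2 * α' := by rw [hβ, hlamm, hα']; ring
    have hα'R : InR k ζ α' := mulInR hk hζ (VInR hk hζ) hβR
    obtain ⟨b', hb'⟩ := hα'R
    have hprod' : (∑ t ∈ Finset.range m, (b' t : ℂ) * ζ ^ t)
        * (starRingEnd ℂ) (∑ t ∈ Finset.range m, (b' t : ℂ) * ζ ^ t) = (4 : ℂ) ^ N := by
      rw [← hb']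
      have h4 : (4 : ℂ) ≠ 0 := by norm_num
      apply mul_left_cancel₀ h4
      have hconj2 : (starRingEnd ℂ) (2 * α') = 2 * (starRingEnd ℂ) α' := by
        rw [map_mul, map_ofNat]
      calc (4 : ℂ) * (α' * (starRingEnd ℂ) α')
          = (2 * α') * ((starRingEnd ℂ) (2 * α')) := by
            rw [hconj2]; ring
      _ = α * (starRingEnd ℂ) α := by rw [← hα2]
      _ = (4 : ℂ) ^ (N + 1) := h
      _ = 4 * (4 : ℂ) ^ N := by ring
    obtain ⟨t₀, ht₀m, ε, hε, hb'val⟩ := ih b' hprod'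
    refine ⟨t₀, ht₀m, ε, hε, ?_⟩
    intro t htm
    have hcoord : b t = 2 * b' t := by
      have heq : ∑ u ∈ Finset.range m, (b u : ℂ) * ζ ^ u
          = ∑ u ∈ Finset.range m, ((2 * b' u : ℤ) : ℂ) * ζ ^ u := by
        rw [← hα, hα2, hb', Finset.mul_sum]
        apply Finset.sum_congr rfl
        intro u _
        push_cast; ring
      exact uniqR hk hζ _ _ heq t htm
    rw [hcoord, hb'val t htm]
    by_cases hteq : t = t₀
    · rw [if_pos hteq, if_pos hteq]; ring
    · rw [if_neg hteq, if_neg hteq]; ring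

end D4

section F
variable {n : ℕ}

lemma negpow_mod2 (a : ℕ) : ((-1 : ℝ)) ^ (a % 2) = (-1 : ℝ) ^ a := by
  conv_rhs => rw [← Nat.div_add_mod a 2]
  rw [pow_add, pow_mul]
  norm_num

lemma val_add_mod : ∀ x y : ZMod 2, (x + y).val = (x.val + y.val) % 2 := by decide

lemma sign_add (x y : ZMod 2) :
    ((-1 : ℝ)) ^ (x + y).val = (-1 : ℝ) ^ x.val * (-1 : ℝ) ^ y.val := by
  rw [val_add_mod, negpow_mod2, pow_add]

lemma dotp_add_right (u x y : Fin n → ZMod 2) : dotp u (x + y) = dotp u x + dotp u y := by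
  unfold dotp
  rw [← Finset.sum_add_distrib]
  apply Finset.sum_congr rfl
  intro i _
  simp [Pi.add_apply, mul_add]

lemma dotp_zero_right (u : Fin n → ZMod 2) : dotp u 0 = 0 := by
  unfold dotp; simp

lemma self_add_self (x : Fin n → ZMod 2) : x + x = 0 := by
  funext i
  exact CharTwo.add_self_eq_zero (x i)

lemma card_V : Fintype.card (Fin n → ZMod 2) = 2 ^ n := by
  rw [Fintype.card_fun]
  simp

lemma orth {t : Fin n → ZMod 2} (ht : t ≠ 0) :
    ∑ u : Fin n → ZMod 2, ((-1 : ℝ)) ^ (dotp u t).val = 0 := by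
  obtain ⟨i, hi⟩ := Function.ne_iff.mp ht
  have hti : t i = 1 := by
    rcases (by decide : ∀ z : ZMod 2, z = 0 ∨ z = 1) (t i) with h | h
    · exact absurd h hi
    · exact h
  set e : Fin n → ZMod 2 := fun j => if j = i then 1 else 0 with he
  have hdote : ∀ u, dotp (u + e) t = dotp u t + 1 := by
    intro u
    unfold dotp
    have : ∀ j ∈ Finset.univ, ((u + e) j * t j : ZMod 2) = u j * t j + (if j = i then t j else 0) := by
      intro j _
      rcases eq_or_ne j i with rfl | hj
      · simp [he]; ring
      · simp [he, hj]
    rw [Finset.sum_congr rfl this, Finset.sum_add_distrib, Finset.sum_ite_eq' Finset.univ i]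
    simp [hti]
  have hbij : Function.Bijective (fun u : Fin n → ZMod 2 => u + e) := by
    constructor
    · intro a b hab
      have := congrArg (fun z => z + e) hab
      simpa [add_assoc, self_add_self] using this
    · intro b
      exact ⟨b + e, show b + e + e = b by rw [add_assoc, self_add_self, add_zero]⟩
  have hsum := Fintype.sum_bijective _ hbij
    (fun u => ((-1 : ℝ)) ^ (dotp (u + e) t).val)
    (fun u => ((-1 : ℝ)) ^ (dotp u t).val) (fun u => rfl)
  have hneg : ∀ u : Fin n → ZMod 2,
      ((-1 : ℝ)) ^ (dotp (u + e) t).val = -((-1 : ℝ)) ^ (dotp u t).val := by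
    intro u
    rw [hdote u, sign_add]
    norm_num [ZMod.val_one]
  have hflip : ∑ u : Fin n → ZMod 2, ((-1 : ℝ)) ^ (dotp u t).val
      = -∑ u : Fin n → ZMod 2, ((-1 : ℝ)) ^ (dotp u t).val := by
    conv_lhs => rw [← hsum]
    rw [← Finset.sum_neg_distrib]
    exact Finset.sum_congr rfl fun u _ => hneg u
  linarith

lemma orth_ite (t : Fin n → ZMod 2) :
    ∑ u : Fin n → ZMod 2, ((-1 : ℝ)) ^ (dotp u t).val
      = if t = 0 then (2 : ℝ) ^ n else 0 := by
  rcases eq_or_ne t 0 with rfl | ht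
  · rw [if_pos rfl]
    have h1 : ∀ u : Fin n → ZMod 2, ((-1 : ℝ)) ^ (dotp u 0).val = 1 := by
      intro u; rw [dotp_zero_right]; simp [ZMod.val_zero]
    rw [Finset.sum_congr rfl (fun u _ => h1 u), Finset.sum_const, Finset.card_univ, card_V]
    simp
  · rw [if_neg ht]; exact orth ht

lemma autocorr_zero (g : (Fin n → ZMod 2) → ZMod 2)
    (hW : ∀ u : Fin n → ZMod 2,
      (∑ x, ((-1 : ℝ)) ^ (g x).val * (-1 : ℝ) ^ (dotp u x).val) ^ 2 = 2 ^ n)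
    {s : Fin n → ZMod 2} (hs : s ≠ 0) :
    ∑ w : Fin n → ZMod 2, ((-1 : ℝ)) ^ (g w).val * (-1 : ℝ) ^ (g (w + s)).val = 0 := by
  classical
  set χ : (Fin n → ZMod 2) → ℝ := fun x => ((-1 : ℝ)) ^ (g x).val with hχ
  set B : (Fin n → ZMod 2) → (Fin n → ZMod 2) → ℝ :=
    fun u x => ((-1 : ℝ)) ^ (dotp u x).val with hB
  have hBmul : ∀ u x y, B u x * B u y * B u s = B u (x + y + s) := by
    intro u x y
    rw [hB]
    simp only
    rw [dotp_add_right, dotp_add_right, sign_add, sign_add]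
  have horth : ∀ t, ∑ u : Fin n → ZMod 2, B u t = if t = 0 then (2:ℝ)^n else 0 :=
    fun t => orth_ite t
  -- way 1
  have way1 : ∑ u : Fin n → ZMod 2, (∑ x, χ x * B u x) ^ 2 * B u s = 0 := by
    have : ∀ u : Fin n → ZMod 2, (∑ x, χ x * B u x) ^ 2 * B u s = (2:ℝ)^n * B u s := by
      intro u; rw [hW u]
    rw [Finset.sum_congr rfl (fun u _ => this u), ← Finset.mul_sum, horth s, if_neg hs,
      mul_zero]
  -- way 2
  have way2 : ∑ u : Fin n → ZMod 2, (∑ x, χ x * B u x) ^ 2 * B u s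
      = (2:ℝ)^n * ∑ x : Fin n → ZMod 2, χ x * χ (x + s) := by
    have hexp : ∀ u : Fin n → ZMod 2, (∑ x, χ x * B u x) ^ 2 * B u s
        = ∑ x : Fin n → ZMod 2, ∑ y : Fin n → ZMod 2, (χ x * χ y) * B u (x + y + s) := by
      intro u
      rw [sq, Finset.sum_mul_sum, Finset.sum_mul]
      apply Finset.sum_congr rfl; intro x _
      rw [Finset.sum_mul]
      apply Finset.sum_congr rfl; intro y _
      rw [← hBmul u x y]
      ring
    rw [Finset.sum_congr rfl (fun u _ => hexp u)]
    rw [Finset.sum_comm]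
    have hinner : ∀ x : Fin n → ZMod 2,
        ∑ u : Fin n → ZMod 2, ∑ y : Fin n → ZMod 2, (χ x * χ y) * B u (x + y + s)
        = (χ x * χ (x + s)) * (2:ℝ)^n := by
      intro x
      rw [Finset.sum_comm]
      have hy : ∀ y : Fin n → ZMod 2,
          ∑ u : Fin n → ZMod 2, (χ x * χ y) * B u (x + y + s)
          = (χ x * χ y) * (if x + y + s = 0 then (2:ℝ)^n else 0) := by
        intro y
        rw [← Finset.mul_sum, horth]
      rw [Finset.sum_congr rfl (fun y _ => hy y)]
      rw [Finset.sum_eq_single (x + s)]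
      · have : x + (x + s) + s = 0 := by
          have h1 : x + (x + s) + s = (x + x) + (s + s) := by abel
          rw [h1, self_add_self, self_add_self, add_zero]
        rw [if_pos this]
      · intro y _ hy'
        have : ¬ (x + y + s = 0) := by
          intro h0
          apply hy'
          have := congrArg (fun z => z + (x + s)) h0
          simp only [zero_add] at this
          rw [← this]
          have h2 : x + y + s + (x + s) = y + ((x + x) + (s + s)) := by abel
          rw [h2, self_add_self, self_add_self, add_zero, add_zero]
        rw [if_neg this, mul_zero]
      · intro hmem; exact absurd (Finset.mem_univ _) hmem
    rw [Finset.sum_congr rfl (fun x _ => hinner x), ← Finset.sum_mul]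
    ring
  rw [way2] at way1
  have h2n : (2:ℝ)^n ≠ 0 := by positivity
  have := mul_eq_zero.mp way1
  rcases this with h | h
  · exact absurd h h2n
  · exact h

lemma count_eq (g : (Fin n → ZMod 2) → ZMod 2)
    (hW : ∀ u : Fin n → ZMod 2,
      (∑ x, ((-1 : ℝ)) ^ (g x).val * (-1 : ℝ) ^ (dotp u x).val) ^ 2 = 2 ^ n)
    (u v : Fin n → ZMod 2) (huv : u ≠ v) :
    4 * ((Finset.univ.filter
        (fun w : Fin n → ZMod 2 => g (u + w) = 1 ∧ g (v + w) = 1)).card : ℝ)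
      = 2 ^ n - 2 * ∑ w : Fin n → ZMod 2, ((-1 : ℝ)) ^ (g w).val := by
  classical
  have h0 : ∀ z : ZMod 2, z = 0 ∨ z = 1 := by decide
  -- claim 1 : the product sum counts
  have claim1 : ∑ w : Fin n → ZMod 2,
      (1 - ((-1 : ℝ)) ^ (g (u + w)).val) * (1 - ((-1 : ℝ)) ^ (g (v + w)).val)
      = 4 * ((Finset.univ.filter
          (fun w : Fin n → ZMod 2 => g (u + w) = 1 ∧ g (v + w) = 1)).card : ℝ) := by
    have hterm : ∀ w : Fin n → ZMod 2,
        (1 - ((-1 : ℝ)) ^ (g (u + w)).val) * (1 - ((-1 : ℝ)) ^ (g (v + w)).val)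
        = if g (u + w) = 1 ∧ g (v + w) = 1 then (4:ℝ) else 0 := by
      intro w
      rcases h0 (g (u + w)) with hgu | hgu <;> rcases h0 (g (v + w)) with hgv | hgv <;>
        rw [hgu, hgv] <;> norm_num [ZMod.val_zero, ZMod.val_one]
    rw [Finset.sum_congr rfl (fun w _ => hterm w), ← Finset.sum_filter,
      Finset.sum_const]
    push_cast
    ring
  -- claim 2 : expansion
  have hreindex : ∀ h : (Fin n → ZMod 2) → ℝ,
      ∑ w : Fin n → ZMod 2, h (u + w) = ∑ w : Fin n → ZMod 2, h w := by
    intro h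
    apply Fintype.sum_bijective (fun w : Fin n → ZMod 2 => u + w)
    · constructor
      · intro a b hab
        have := congrArg (fun z => u + z) hab
        simpa [← add_assoc, self_add_self] using this
      · intro b; exact ⟨u + b, show u + (u + b) = b by rw [← add_assoc, self_add_self, zero_add]⟩
    · intro w; rfl
  have hreindexv : ∀ h : (Fin n → ZMod 2) → ℝ,
      ∑ w : Fin n → ZMod 2, h (v + w) = ∑ w : Fin n → ZMod 2, h w := by
    intro h
    apply Fintype.sum_bijective (fun w : Fin n → ZMod 2 => v + w)
    · constructor
      · intro a b hab
        have := congrArg (fun z => v + z) hab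
        simpa [← add_assoc, self_add_self] using this
      · intro b; exact ⟨v + b, show v + (v + b) = b by rw [← add_assoc, self_add_self, zero_add]⟩
    · intro w; rfl
  have hs : v + u ≠ 0 := by
    intro h
    apply huv
    have := congrArg (fun z => z + u) h
    simpa [add_assoc, self_add_self] using this.symm
  have hcross : ∑ w : Fin n → ZMod 2,
      ((-1 : ℝ)) ^ (g (u + w)).val * ((-1 : ℝ)) ^ (g (v + w)).val = 0 := by
    have hhh : ∑ w : Fin n → ZMod 2,
        ((-1 : ℝ)) ^ (g w).val * ((-1 : ℝ)) ^ (g (w + (v + u))).val = 0 :=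
      autocorr_zero g hW hs
    rw [← hhh]
    apply Fintype.sum_bijective (fun w : Fin n → ZMod 2 => u + w)
    · constructor
      · intro a b hab
        have := congrArg (fun z => u + z) hab
        simpa [← add_assoc, self_add_self] using this
      · intro b; exact ⟨u + b, show u + (u + b) = b by rw [← add_assoc, self_add_self, zero_add]⟩
    · intro w
      have e3 : u + w + (v + u) = v + w + (u + u) := by abel
      rw [e3, self_add_self, add_zero]
  have claim2 : ∑ w : Fin n → ZMod 2,
      (1 - ((-1 : ℝ)) ^ (g (u + w)).val) * (1 - ((-1 : ℝ)) ^ (g (v + w)).val)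
      = 2 ^ n - 2 * ∑ w : Fin n → ZMod 2, ((-1 : ℝ)) ^ (g w).val := by
    have hterm : ∀ w : Fin n → ZMod 2,
        (1 - ((-1 : ℝ)) ^ (g (u + w)).val) * (1 - ((-1 : ℝ)) ^ (g (v + w)).val)
        = 1 - ((-1 : ℝ)) ^ (g (u + w)).val - ((-1 : ℝ)) ^ (g (v + w)).val
          + ((-1 : ℝ)) ^ (g (u + w)).val * ((-1 : ℝ)) ^ (g (v + w)).val := by
      intro w; ring
    rw [Finset.sum_congr rfl (fun w _ => hterm w)]
    rw [Finset.sum_add_distrib, Finset.sum_sub_distrib, Finset.sum_sub_distrib]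
    rw [hreindex (fun w => ((-1 : ℝ)) ^ (g w).val),
      hreindexv (fun w => ((-1 : ℝ)) ^ (g w).val), hcross]
    rw [Finset.sum_const, Finset.card_univ, card_V]
    push_cast
    ring
  rw [← claim1, claim2]

lemma count_indep (g : (Fin n → ZMod 2) → ZMod 2)
    (hW : ∀ u : Fin n → ZMod 2,
      (∑ x, ((-1 : ℝ)) ^ (g x).val * (-1 : ℝ) ^ (dotp u x).val) ^ 2 = 2 ^ n)
    (u v x y : Fin n → ZMod 2) (huv : u ≠ v) (hxy : x ≠ y) :
    Nat.card {w : Fin n → ZMod 2 | g (u + w) = 1 ∧ g (v + w) = 1}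
      = Nat.card {w : Fin n → ZMod 2 | g (x + w) = 1 ∧ g (y + w) = 1} := by
  classical
  have hc : ∀ a b : Fin n → ZMod 2,
      Nat.card {w : Fin n → ZMod 2 | g (a + w) = 1 ∧ g (b + w) = 1}
      = (Finset.univ.filter
          (fun w : Fin n → ZMod 2 => g (a + w) = 1 ∧ g (b + w) = 1)).card := by
    intro a b
    rw [Nat.card_coe_set_eq, Set.ncard_eq_toFinset_card', Set.toFinset_setOf]
  rw [hc u v, hc x y]
  have h1 := count_eq g hW u v huv
  have h2 := count_eq g hW x y hxy
  have : 4 * ((Finset.univ.filter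
      (fun w : Fin n → ZMod 2 => g (u + w) = 1 ∧ g (v + w) = 1)).card : ℝ)
      = 4 * ((Finset.univ.filter
      (fun w : Fin n → ZMod 2 => g (x + w) = 1 ∧ g (y + w) = 1)).card : ℝ) := by
    rw [h1, h2]
  have hcast : ((Finset.univ.filter
      (fun w : Fin n → ZMod 2 => g (u + w) = 1 ∧ g (v + w) = 1)).card : ℝ)
      = ((Finset.univ.filter
      (fun w : Fin n → ZMod 2 => g (x + w) = 1 ∧ g (y + w) = 1)).card : ℝ) := by
    linarith
  exact_mod_cast hcast
end F

section G
variable {k : ℕ}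

lemma zmod2_cases : ∀ z : ZMod 2, z = 0 ∨ z = 1 := by decide

lemma val_mul_z : ∀ x y : ZMod 2, (x * y).val = x.val * y.val := by decide

lemma val_eq_zero_z : ∀ x : ZMod 2, x.val = 0 → x = 0 := by decide

lemma sum_val_natCast (c e : Fin k → ZMod 2) :
    (∑ i, c i * e i : ZMod 2) = ((∑ i, (c i).val * (e i).val : ℕ) : ZMod 2) := by
  rw [Nat.cast_sum]
  apply Finset.sum_congr rfl
  intro i _
  rw [Nat.cast_mul, ZMod.natCast_val, ZMod.natCast_val, ZMod.cast_id, ZMod.cast_id]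

lemma natCast_zmod2_eq_one (N : ℕ) : ((N : ZMod 2) = 1) ↔ N % 2 = 1 := by
  constructor
  · intro h
    rcases Nat.even_or_odd N with he | ho
    · exfalso
      obtain ⟨r, hr⟩ := he
      rw [hr] at h
      push_cast at h
      have : (r : ZMod 2) + r = 0 := CharTwo.add_self_eq_zero _
      rw [this] at h
      exact absurd h.symm (by decide)
    · exact Nat.odd_iff.mp ho
  · intro h
    conv_lhs => rw [← Nat.div_add_mod N 2, h]
    push_cast
    rw [show (2 : ZMod 2) = 0 from rfl]
    ring

lemma mem_Xc1_iff (hk : 2 ≤ k) (c : Fin k → ZMod 2) (hc : c ⟨k - 1, Nat.sub_lt (by omega) Nat.one_pos⟩ = 1)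
    (e : Fin k → ZMod 2) :
    ((((∑ i, (e i).val * 2 ^ (i : ℕ) : ℕ)) : ZMod (2 ^ k)) ∈ Xc1 k c)
      ↔ (∑ i, (c i).val * (e i).val) % 2 = 1 := by
  have hklast : ∀ i : Fin k, (i : ℕ) = k - 1 → i = ⟨k - 1, Nat.sub_lt (by omega) Nat.one_pos⟩ := by
    intro i hi; exact Fin.ext hi
  constructor
  · rintro ⟨ct, dd, hct, hdd, hodd, heq⟩
    -- pointwise values add
    have hdd0 : ∀ i, c i = 1 → dd i = 0 := by
      intro i hci
      rcases Nat.lt_or_ge (i : ℕ) (k - 1) with hi | hi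
      · have := (hdd i).1 hi
        rw [hci] at this
        simp [ZMod.val_one] at this
        exact this
      · have hieq : (i : ℕ) = k - 1 := by have := i.isLt; omega
        exact val_eq_zero_z _ ((hdd i).2 hieq)
    have hct0 : ∀ i, c i = 0 → ct i = 0 := by
      intro i hci
      have := hct i
      rw [hci] at this
      simp [ZMod.val_zero] at this
      exact this
    have hvadd : ∀ i, ((ct i + dd i).val) = (ct i).val + (dd i).val := by
      intro i
      rcases zmod2_cases (c i) with hci | hci
      · rw [hct0 i hci]; simp
      · rw [hdd0 i hci]; simp
    have hsum : (∑ i, (ct i).val * 2 ^ (i : ℕ)) + ∑ i, (dd i).val * 2 ^ (i : ℕ)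
        = ∑ i, ((fun j => ct j + dd j) i).val * 2 ^ (i : ℕ) := by
      rw [← Finset.sum_add_distrib]
      apply Finset.sum_congr rfl
      intro i _
      rw [hvadd i]
      ring
    rw [hsum] at heq
    have hlt1 := repr_lt k e
    have hlt2 := repr_lt k (fun j => ct j + dd j)
    have hval := congrArg ZMod.val heq
    rw [ZMod.val_cast_of_lt hlt1, ZMod.val_cast_of_lt hlt2] at hval
    have he := repr_inj k _ _ hval
    -- now compute the parity
    have hparity : ∑ i, (c i).val * (e i).val = ∑ i, (ct i).val := by
      apply Finset.sum_congr rfl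
      intro i _
      have : e i = ct i + dd i := congrFun he i
      rw [this]
      rcases zmod2_cases (c i) with hci | hci
      · rw [hct0 i hci, hci]; simp [ZMod.val_zero]
      · rw [hdd0 i hci, hci]; simp [ZMod.val_one]
    rw [hparity]
    exact Nat.odd_iff.mp hodd
  · intro hpar
    classical
    refine ⟨fun i => c i * e i,
      fun i => if (i : ℕ) = k - 1 then 0 else (1 - c i) * e i, ?_, ?_, ?_, ?_⟩
    · intro i
      show (c i * e i).val ≤ (c i).val
      rcases zmod2_cases (c i) with hci | hci <;> rcases zmod2_cases (e i) with hei | hei <;>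
        rw [hci, hei] <;> decide
    · intro i
      constructor
      · intro hi
        show ((if (i : ℕ) = k - 1 then (0 : ZMod 2) else (1 - c i) * e i)).val ≤ 1 - (c i).val
        rw [if_neg (by omega)]
        rcases zmod2_cases (c i) with hci | hci <;> rcases zmod2_cases (e i) with hei | hei <;>
          rw [hci, hei] <;> decide
      · intro hi
        show ((if (i : ℕ) = k - 1 then (0 : ZMod 2) else (1 - c i) * e i)).val = 0
        rw [if_pos hi]
        decide
    · show Odd (∑ i, (c i * e i).val)
      have : ∀ i, ((c i * e i).val) = (c i).val * (e i).val := fun i => val_mul_z _ _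
      rw [Finset.sum_congr rfl (fun i _ => this i)]
      exact Nat.odd_iff.mpr hpar
    · show ((((∑ i : Fin k, (e i).val * 2 ^ (i : ℕ) : ℕ)) : ZMod (2 ^ k)))
        = ((((∑ i : Fin k, (c i * e i).val * 2 ^ (i : ℕ))
            + ∑ i : Fin k, ((if (i : ℕ) = k - 1 then (0 : ZMod 2) else (1 - c i) * e i)).val
              * 2 ^ (i : ℕ) : ℕ)) : ZMod (2 ^ k))
      congr 1
      have : ∀ i ∈ Finset.univ, (e i).val * 2 ^ (i : ℕ)
          = (c i * e i).val * 2 ^ (i : ℕ)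
            + ((if (i : ℕ) = k - 1 then (0 : ZMod 2) else (1 - c i) * e i)).val * 2 ^ (i : ℕ) := by
        intro i _
        rcases Nat.lt_or_ge (i : ℕ) (k - 1) with hi | hi
        · rw [if_neg (by omega)]
          rcases zmod2_cases (c i) with hci | hci <;> rcases zmod2_cases (e i) with hei | hei <;>
            rw [hci, hei] <;> norm_num
        · have hieq : (i : ℕ) = k - 1 := by have := i.isLt; omega
          rw [if_pos hieq]
          have hci : c i = 1 := by rw [hklast i hieq]; exact hc
          rw [hci]
          norm_num [ZMod.val_zero]
      rw [Finset.sum_congr rfl this, Finset.sum_add_distrib]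
end G

section E

lemma walsh_sq (n k : ℕ) (hn : Even n) (hk : 2 ≤ k)
    (f : (Fin n → ZMod 2) → ZMod (2 ^ k))
    (a : Fin k → (Fin n → ZMod 2) → ZMod 2)
    (hf : ∀ x, (f x).val = ∑ i : Fin k, (a i x).val * 2 ^ (i : ℕ))
    (hgbent : ∀ u : Fin n → ZMod 2,
      ‖∑ x, zeta (2 ^ k) ^ (f x).val * chr u x‖ = Real.sqrt (2 ^ n))
    (c : Fin k → ZMod 2) (hc : c ⟨k - 1, Nat.sub_lt (by omega) Nat.one_pos⟩ = 1)
    (u : Fin n → ZMod 2) :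
    (∑ x, ((-1 : ℝ)) ^ ((∑ i, c i * a i x : ZMod 2)).val * (-1 : ℝ) ^ (dotp u x).val) ^ 2
      = 2 ^ n := by
  classical
  obtain ⟨ν, hν⟩ := hn
  set m := 2 ^ (k - 1) with hm
  have hmpos : 0 < m := by positivity
  have h2k : 2 ^ k = 2 * m := by rw [hm, ← pow_succ']; congr 1; omega
  set ζ := zeta (2 ^ k) with hzeta
  have hζ : IsPrimitiveRoot ζ (2 ^ k) := by
    rw [hzeta]
    exact Complex.isPrimitiveRoot_exp _ (by positivity)
  set klast : Fin k := ⟨k - 1, Nat.sub_lt (by omega) Nat.one_pos⟩ with hklast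
  set δ : Fin k → ZMod 2 := fun i => if i = klast then 1 else 0 with hδ
  set avec : (Fin n → ZMod 2) → (Fin k → ZMod 2) := fun x i => a i x with havec
  set valk : (Fin k → ZMod 2) → ℕ := fun e => ∑ i, (e i).val * 2 ^ (i : ℕ) with hvalk
  set Bi : (Fin k → ZMod 2) → ℤ :=
    fun e => ∑ x ∈ Finset.univ.filter (fun x => avec x = e), (-1 : ℤ) ^ (dotp u x).val with hBi
  -- top-bit arithmetic
  have hδtop : ∀ e : Fin k → ZMod 2, e klast = 0 → (e + δ) klast = 1 := by
    intro e he
    simp [hδ, Pi.add_apply, he]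
  have hδval : ∀ e : Fin k → ZMod 2, e klast = 0 → valk (e + δ) = valk e + 2 ^ (k - 1) := by
    intro e he
    rw [hvalk]
    simp only
    have hterm : ∀ i ∈ Finset.univ, (((e + δ) i).val) * 2 ^ (i : ℕ)
        = (e i).val * 2 ^ (i : ℕ) + (if i = klast then 2 ^ (k - 1) else 0) := by
      intro i _
      by_cases hi : i = klast
      · rw [if_pos hi]
        have h1 : (e + δ) i = 1 := by rw [hi]; exact hδtop e he
        have h2 : e i = 0 := by rw [hi]; exact he
        have h3 : (i : ℕ) = k - 1 := by rw [hi]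
        rw [h1, h2, h3, show ((1 : ZMod 2)).val = 1 from rfl, show ((0 : ZMod 2)).val = 0 from rfl]
        ring
      · rw [if_neg hi]
        have h1 : (e + δ) i = e i := by
          rw [Pi.add_apply]
          have hd : δ i = 0 := by rw [hδ]; simp [hi]
          rw [hd, add_zero]
        rw [h1, add_zero]
    rw [Finset.sum_congr rfl hterm, Finset.sum_add_distrib, Finset.sum_ite_eq' Finset.univ klast]
    simp
  have htoplt : ∀ e : Fin k → ZMod 2, e klast = 0 → valk e < m := by
    intro e he
    have h1 : valk (e + δ) < 2 ^ k := repr_lt k (e + δ)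
    rw [hδval e he] at h1
    omega
  have hδδ : ∀ e : Fin k → ZMod 2, e + δ + δ = e := by
    intro e
    rw [add_assoc, self_add_self (n := k) δ, add_zero]
  -- α and its coordinate form
  set α : ℂ := ∑ x, ζ ^ (f x).val * chr u x with hα
  have step1 : α = ∑ e : Fin k → ZMod 2, (Bi e : ℂ) * ζ ^ valk e := by
    rw [hα]
    rw [← Finset.sum_fiberwise_of_maps_to (g := avec) (fun x _ => Finset.mem_univ (avec x))
      (fun x => ζ ^ (f x).val * chr u x)]
    apply Finset.sum_congr rfl
    intro e _
    rw [hBi]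
    push_cast
    rw [Finset.sum_mul]
    apply Finset.sum_congr rfl
    intro x hx
    have hax : avec x = e := (Finset.mem_filter.mp hx).2
    have hval : (f x).val = valk (avec x) := hf x
    rw [hval, hax]
    unfold chr
    ring
  have step2 : α = ∑ e ∈ Finset.univ.filter (fun e : Fin k → ZMod 2 => e klast = 0),
      ((Bi e - Bi (e + δ) : ℤ) : ℂ) * ζ ^ valk e := by
    rw [step1]
    rw [← Finset.sum_filter_add_sum_filter_not Finset.univ
      (fun e : Fin k → ZMod 2 => e klast = 0)]
    have hre : ∑ e ∈ Finset.univ.filter (fun e : Fin k → ZMod 2 => ¬ e klast = 0),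
        (Bi e : ℂ) * ζ ^ valk e
        = ∑ e ∈ Finset.univ.filter (fun e : Fin k → ZMod 2 => e klast = 0),
          (Bi (e + δ) : ℂ) * ζ ^ valk (e + δ) := by
      apply Finset.sum_nbij' (fun e => e + δ) (fun e => e + δ)
      · intro e he
        rw [Finset.mem_filter] at he ⊢
        refine ⟨Finset.mem_univ _, ?_⟩
        rcases zmod2_cases (e klast) with h | h
        · exact absurd h he.2
        · show (e + δ) klast = 0
          rw [Pi.add_apply, h]
          have hd : δ klast = 1 := by rw [hδ]; simp
          rw [hd]
          decide
      · intro e he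
        rw [Finset.mem_filter] at he ⊢
        refine ⟨Finset.mem_univ _, ?_⟩
        have h1 := hδtop e he.2
        rw [h1]
        decide
      · intro e _; exact hδδ e
      · intro e _; exact hδδ e
      · intro e _; rw [hδδ e]
    rw [hre, ← Finset.sum_add_distrib]
    apply Finset.sum_congr rfl
    intro e he
    have hetop : e klast = 0 := (Finset.mem_filter.mp he).2
    rw [hδval e hetop, pow_add, zeta_pow_m hk hζ]
    push_cast
    ring
  -- coordinates
  set b : ℕ → ℤ := fun t => ∑ e ∈ Finset.univ.filter
      (fun e : Fin k → ZMod 2 => e klast = 0 ∧ valk e = t), (Bi e - Bi (e + δ)) with hb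
  have hfilter : ∀ t, Finset.univ.filter
      (fun e : Fin k → ZMod 2 => e klast = 0 ∧ valk e = t)
      = (Finset.univ.filter (fun e : Fin k → ZMod 2 => e klast = 0)).filter
          (fun e => valk e = t) := by
    intro t
    rw [Finset.filter_filter]
  have hαb : α = ∑ t ∈ Finset.range m, (b t : ℂ) * ζ ^ t := by
    rw [step2]
    rw [← Finset.sum_fiberwise_of_maps_to (g := valk)
      (fun e he => Finset.mem_range.mpr (htoplt e (Finset.mem_filter.mp he).2))
      (fun e => ((Bi e - Bi (e + δ) : ℤ) : ℂ) * ζ ^ valk e)]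
    apply Finset.sum_congr rfl
    intro t _
    rw [hb]
    simp only
    rw [hfilter t, Int.cast_sum, Finset.sum_mul]
    apply Finset.sum_congr rfl
    intro e he
    have : valk e = t := (Finset.mem_filter.mp he).2
    rw [this]
  -- the modulus condition
  have hprod : (∑ t ∈ Finset.range m, (b t : ℂ) * ζ ^ t)
      * (starRingEnd ℂ) (∑ t ∈ Finset.range m, (b t : ℂ) * ζ ^ t) = (4 : ℂ) ^ ν := by
    rw [← hαb]
    have hnorm : ‖α‖ = Real.sqrt (2 ^ n) := hgbent u
    have h1 : α * (starRingEnd ℂ) α = ((‖α‖ ^ 2 : ℝ) : ℂ) := by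
      rw [Complex.mul_conj, Complex.normSq_eq_norm_sq]
    rw [h1, hnorm, Real.sq_sqrt (by positivity)]
    push_cast
    rw [show ((4:ℂ)) = 2 ^ 2 by norm_num, ← pow_mul]
    congr 1
    omega
  obtain ⟨t₀, ht₀m, ε, hε, hbval⟩ := alpha_classify hk hζ ν b hprod
  -- now the real Walsh sum
  set Npar : (Fin k → ZMod 2) → ℕ := fun e => ∑ i, (c i).val * (e i).val with hNpar
  have hgx : ∀ x, ((-1 : ℝ)) ^ ((∑ i, c i * a i x : ZMod 2)).val
      = ((-1 : ℝ)) ^ (Npar (avec x)) := by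
    intro x
    rw [sum_val_natCast c (avec x)]
    rw [ZMod.val_natCast]
    exact negpow_mod2 _
  have hW1 : ∑ x, ((-1 : ℝ)) ^ ((∑ i, c i * a i x : ZMod 2)).val * (-1 : ℝ) ^ (dotp u x).val
      = ∑ e : Fin k → ZMod 2, ((-1 : ℝ)) ^ (Npar e) * ((Bi e : ℤ) : ℝ) := by
    rw [← Finset.sum_fiberwise_of_maps_to (g := avec) (fun x _ => Finset.mem_univ (avec x))
      (fun x => ((-1 : ℝ)) ^ ((∑ i, c i * a i x : ZMod 2)).val * (-1 : ℝ) ^ (dotp u x).val)]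
    apply Finset.sum_congr rfl
    intro e _
    rw [hBi]
    push_cast
    rw [Finset.mul_sum]
    apply Finset.sum_congr rfl
    intro x hx
    have hax : avec x = e := (Finset.mem_filter.mp hx).2
    rw [hgx x, hax]
  have hNparδ : ∀ e : Fin k → ZMod 2, e klast = 0 → Npar (e + δ) = Npar e + 1 := by
    intro e he
    rw [hNpar]
    simp only
    have hterm : ∀ i ∈ Finset.univ, (c i).val * (((e + δ) i).val)
        = (c i).val * (e i).val + (if i = klast then 1 else 0) := by
      intro i _
      by_cases hi : i = klast
      · rw [if_pos hi]
        have h1 : (e + δ) i = 1 := by rw [hi]; exact hδtop e he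
        have h2 : c i = 1 := by rw [hi]; exact hc
        have h4 : e i = 0 := by rw [hi]; exact he
        rw [h1, h2, h4, show ((1 : ZMod 2)).val = 1 from rfl, show ((0 : ZMod 2)).val = 0 from rfl]
      · rw [if_neg hi]
        have h1 : (e + δ) i = e i := by
          rw [Pi.add_apply]
          have hd : δ i = 0 := by rw [hδ]; simp [hi]
          rw [hd, add_zero]
        rw [h1, add_zero]
    rw [Finset.sum_congr rfl hterm, Finset.sum_add_distrib, Finset.sum_ite_eq' Finset.univ klast]
    simp
  have hW2 : ∑ x, ((-1 : ℝ)) ^ ((∑ i, c i * a i x : ZMod 2)).val * (-1 : ℝ) ^ (dotp u x).val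
      = ∑ e ∈ Finset.univ.filter (fun e : Fin k → ZMod 2 => e klast = 0),
          ((-1 : ℝ)) ^ (Npar e) * ((Bi e - Bi (e + δ) : ℤ) : ℝ) := by
    rw [hW1]
    rw [← Finset.sum_filter_add_sum_filter_not Finset.univ
      (fun e : Fin k → ZMod 2 => e klast = 0)]
    have hre : ∑ e ∈ Finset.univ.filter (fun e : Fin k → ZMod 2 => ¬ e klast = 0),
        ((-1 : ℝ)) ^ (Npar e) * ((Bi e : ℤ) : ℝ)
        = ∑ e ∈ Finset.univ.filter (fun e : Fin k → ZMod 2 => e klast = 0),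
          ((-1 : ℝ)) ^ (Npar (e + δ)) * ((Bi (e + δ) : ℤ) : ℝ) := by
      apply Finset.sum_nbij' (fun e => e + δ) (fun e => e + δ)
      · intro e he
        rw [Finset.mem_filter] at he ⊢
        refine ⟨Finset.mem_univ _, ?_⟩
        rcases zmod2_cases (e klast) with h | h
        · exact absurd h he.2
        · show (e + δ) klast = 0
          rw [Pi.add_apply, h]
          have hd : δ klast = 1 := by rw [hδ]; simp
          rw [hd]
          decide
      · intro e he
        rw [Finset.mem_filter] at he ⊢
        refine ⟨Finset.mem_univ _, ?_⟩
        have h1 := hδtop e he.2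
        rw [h1]
        decide
      · intro e _; exact hδδ e
      · intro e _; exact hδδ e
      · intro e _; rw [hδδ e]
    rw [hre, ← Finset.sum_add_distrib]
    apply Finset.sum_congr rfl
    intro e he
    have hetop : e klast = 0 := (Finset.mem_filter.mp he).2
    rw [hNparδ e hetop, pow_succ]
    push_cast
    ring
  -- identify coefficients
  have hDe : ∀ e : Fin k → ZMod 2, e klast = 0 → b (valk e) = Bi e - Bi (e + δ) := by
    intro e he
    rw [hb]
    simp only
    apply Finset.sum_eq_single_of_mem e
    · rw [Finset.mem_filter]
      exact ⟨Finset.mem_univ _, he, rfl⟩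
    · intro e' he' hne
      exfalso
      apply hne
      have h1 := (Finset.mem_filter.mp he').2
      exact repr_inj k e' e h1.2
  -- existence of the top coefficient fiber
  have hbne : b t₀ ≠ 0 := by
    rw [hbval t₀ (by omega)]
    rw [if_pos rfl]
    rcases hε with rfl | rfl <;> simp <;> positivity
  have hex : ∃ e₀, e₀ ∈ Finset.univ.filter
      (fun e : Fin k → ZMod 2 => e klast = 0 ∧ valk e = t₀) := by
    by_contra hno
    push_neg at hno
    apply hbne
    rw [hb]
    simp only
    apply Finset.sum_eq_zero
    intro e he
    exact absurd he (hno e)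
  obtain ⟨e₀, he₀⟩ := hex
  have he₀p := (Finset.mem_filter.mp he₀).2
  -- collapse the Walsh sum
  have hW3 : ∑ x, ((-1 : ℝ)) ^ ((∑ i, c i * a i x : ZMod 2)).val * (-1 : ℝ) ^ (dotp u x).val
      = ((-1 : ℝ)) ^ (Npar e₀) * ((ε * 2 ^ ν : ℤ) : ℝ) := by
    rw [hW2]
    rw [Finset.sum_eq_single_of_mem e₀ (by
      rw [Finset.mem_filter]; exact ⟨Finset.mem_univ _, he₀p.1⟩)]
    · rw [← hDe e₀ he₀p.1, he₀p.2, hbval t₀ (by omega), if_pos rfl]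
    · intro e he hne
      have hetop : e klast = 0 := (Finset.mem_filter.mp he).2
      have hvne : valk e ≠ t₀ := by
        intro hveq
        apply hne
        rw [← he₀p.2] at hveq
        exact repr_inj k e e₀ hveq
      rw [← hDe e hetop, hbval (valk e) (htoplt e hetop), if_neg hvne]
      push_cast
      ring
  rw [hW3]
  have hsq1 : (((-1 : ℝ)) ^ (Npar e₀)) ^ 2 = 1 := by
    rw [← pow_mul, mul_comm, pow_mul]
    norm_num
  have hsq2 : (((ε * 2 ^ ν : ℤ) : ℝ)) ^ 2 = 2 ^ n := by
    have hε2 : ((ε : ℝ)) ^ 2 = 1 := by rcases hε with rfl | rfl <;> norm_num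
    calc (((ε * 2 ^ ν : ℤ) : ℝ)) ^ 2 = ((ε : ℝ)) ^ 2 * ((2 : ℝ) ^ ν) ^ 2 := by push_cast; ring
    _ = ((2 : ℝ) ^ ν) ^ 2 := by rw [hε2, one_mul]
    _ = 2 ^ n := by rw [← pow_mul]; congr 1; omega
  rw [mul_pow, hsq1, hsq2, one_mul]

end E

/-- If `f = Σ 2^i a_i : V_n → Z_{2^k}` (`n` even, `k ≥ 2`) is gbent, then for every
`c ∈ F_2^{k-1}` (represented by a `c : Fin k → F_2` with last coordinate `1`) the quantity
`|N_{X_c^1}(u,v)|` is the same for all pairs of distinct vertices. -/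
theorem gbent_NXc1_constant (n k : ℕ) (hn : Even n) (hk : 2 ≤ k)
    (f : (Fin n → ZMod 2) → ZMod (2 ^ k))
    (a : Fin k → (Fin n → ZMod 2) → ZMod 2)
    (hf : ∀ x, (f x).val = ∑ i : Fin k, (a i x).val * 2 ^ (i : ℕ))
    (hgbent : ∀ u : Fin n → ZMod 2,
      ‖∑ x, zeta (2 ^ k) ^ (f x).val * chr u x‖ = Real.sqrt (2 ^ n)) :
    ∀ c : Fin k → ZMod 2, c ⟨k - 1, by omega⟩ = 1 →
      ∀ u v x y : Fin n → ZMod 2, u ≠ v → x ≠ y →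
        Nat.card {w : Fin n → ZMod 2 | f (u + w) ∈ Xc1 k c ∧ f (v + w) ∈ Xc1 k c} =
          Nat.card {w : Fin n → ZMod 2 | f (x + w) ∈ Xc1 k c ∧ f (y + w) ∈ Xc1 k c} := by
  
  intro c hc u v x y huv hxy
  haveI : NeZero (2 ^ k) := ⟨by positivity⟩
  have hmem : ∀ z : Fin n → ZMod 2,
      (f z ∈ Xc1 k c) ↔ (∑ i, c i * a i z : ZMod 2) = 1 := by
    intro z
    have h1 : f z = ((∑ i : Fin k, ((fun j => a j z) i).val * 2 ^ (i : ℕ) : ℕ) : ZMod (2 ^ k)) := by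
      have h2 := ZMod.natCast_rightInverse (n := 2 ^ k) (f z)
      rw [hf z] at h2
      exact h2.symm
    rw [h1, mem_Xc1_iff hk c hc (fun j => a j z)]
    have h3 : (∑ i, c i * a i z : ZMod 2)
        = ((∑ i, (c i).val * ((fun j => a j z) i).val : ℕ) : ZMod 2) :=
      sum_val_natCast c (fun j => a j z)
    rw [h3, natCast_zmod2_eq_one]
  have hW : ∀ u' : Fin n → ZMod 2,
      (∑ x', ((-1 : ℝ)) ^ ((∑ i, c i * a i x' : ZMod 2)).val
        * (-1 : ℝ) ^ (dotp u' x').val) ^ 2 = 2 ^ n :=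
    fun u' => walsh_sq n k hn hk f a hf hgbent c hc u'
  have hset : ∀ p q : Fin n → ZMod 2,
      {w : Fin n → ZMod 2 | f (p + w) ∈ Xc1 k c ∧ f (q + w) ∈ Xc1 k c}
      = {w : Fin n → ZMod 2 | (∑ i, c i * a i (p + w) : ZMod 2) = 1
          ∧ (∑ i, c i * a i (q + w) : ZMod 2) = 1} := by
    intro p q
    ext w
    simp only [Set.mem_setOf_eq]
    rw [hmem (p + w), hmem (q + w)]
  rw [hset u v, hset x y]
  exact count_indep (fun z => ∑ i, c i * a i z) hW u v x y huv hxy
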